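/- Define g : [1,∞) → ℝ by g(x) = (y + sin y)/2 − x (y − sin y)/2 where y = arccos((x−1)/(x+1)). Then g(1) = 1, g is monotonically decreasing, and lim_{x→∞} g(x) = 0. -/

import Mathlib

open Real Filter Set

/-- The function `g(x) = (y + sin y)/2 − x (y − sin y)/2` where `y = arccos((x−1)/(x+1))`. -/
noncomputable def gfun (x : ℝ) : ℝ :=
  (Real.arccos ((x - 1) / (x + 1)) + Real.sin (Real.arccos ((x - 1) / (x + 1)))) / 2 -
    x * ((Real.arccos ((x - 1) / (x + 1)) - Real.sin (Real.arccos ((x - 1) / (x + 1)))) / 2)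

lemma sin_arccos_frac (x : ℝ) (hx : (1:ℝ) ≤ x) :
    Real.sin (Real.arccos ((x - 1) / (x + 1))) = 2 * Real.sqrt x / (x + 1) := by
  have hx1 : (0:ℝ) < x + 1 := by linarith
  have hs : Real.sqrt x ^ 2 = x := Real.sq_sqrt (by linarith)
  have h1 : 1 - ((x - 1) / (x + 1)) ^ 2 = (2 * Real.sqrt x / (x + 1)) ^ 2 := by
    field_simp
    nlinarith [hs]
  rw [Real.sin_arccos, h1, Real.sqrt_sq (by positivity)]

lemma gfun_eq (x : ℝ) (hx : (1:ℝ) ≤ x) :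
    gfun x = Real.sqrt x - (x - 1) / 2 * Real.arccos ((x - 1) / (x + 1)) := by
  have hx1 : (0:ℝ) < x + 1 := by linarith
  rw [gfun, sin_arccos_frac x hx]
  field_simp
  ring

lemma frac_lt_one (x : ℝ) (hx : (1:ℝ) ≤ x) : (x - 1) / (x + 1) < 1 := by
  rw [div_lt_one (by linarith)]; linarith

lemma frac_nonneg (x : ℝ) (hx : (1:ℝ) ≤ x) : 0 ≤ (x - 1) / (x + 1) := by
  apply div_nonneg <;> linarith

/-- Derivative of the closed form. -/
lemma hasDerivAt_g (x : ℝ) (hx : (1:ℝ) < x) :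
    HasDerivAt (fun t => Real.sqrt t - (t - 1) / 2 * Real.arccos ((t - 1) / (t + 1)))
      (Real.sqrt x / (x + 1) - Real.arccos ((x - 1) / (x + 1)) / 2) x := by
  have hx0 : (0:ℝ) < x := by linarith
  have hx1 : (0:ℝ) < x + 1 := by linarith
  have hsx : (0:ℝ) < Real.sqrt x := Real.sqrt_pos.2 hx0
  have hs : Real.sqrt x ^ 2 = x := Real.sq_sqrt hx0.le
  have hu : HasDerivAt (fun t : ℝ => (t - 1) / (t + 1)) (2 / (x + 1) ^ 2) x := by
    have h1 : HasDerivAt (fun t : ℝ => t - 1) 1 x := (hasDerivAt_id x).sub_const 1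
    have h2 : HasDerivAt (fun t : ℝ => t + 1) 1 x := (hasDerivAt_id x).add_const 1
    have := h1.div h2 (by linarith)
    refine this.congr_deriv ?_
    ring
  have hne1 : (x - 1) / (x + 1) ≠ 1 := ne_of_lt (frac_lt_one x hx.le)
  have hnem1 : (x - 1) / (x + 1) ≠ -1 := by
    have := frac_nonneg x hx.le; linarith
  have harc : HasDerivAt (fun t : ℝ => Real.arccos ((t - 1) / (t + 1)))
      (-(1 / Real.sqrt (1 - ((x - 1) / (x + 1)) ^ 2)) * (2 / (x + 1) ^ 2)) x :=
    by have := (Real.hasDerivAt_arccos hnem1 hne1).comp x hu; exact this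
  have hsq : Real.sqrt (1 - ((x - 1) / (x + 1)) ^ 2) = 2 * Real.sqrt x / (x + 1) := by
    have h1 : 1 - ((x - 1) / (x + 1)) ^ 2 = (2 * Real.sqrt x / (x + 1)) ^ 2 := by
      field_simp; nlinarith [hs]
    rw [h1, Real.sqrt_sq (by positivity)]
  rw [hsq] at harc
  have hlin : HasDerivAt (fun t : ℝ => (t - 1) / 2) (1 / 2) x := by
    have := ((hasDerivAt_id x).sub_const 1).div_const 2
    simpa using this
  have hprod := hlin.mul harc
  have hsqrt : HasDerivAt Real.sqrt (1 / (2 * Real.sqrt x)) x :=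
    Real.hasDerivAt_sqrt (ne_of_gt hx0)
  have hd := hsqrt.sub hprod
  refine hd.congr_deriv ?_
  set s := Real.sqrt x with hsdef
  rw [← hs]
  field_simp
  ring

lemma continuousOn_g : ContinuousOn
    (fun t : ℝ => Real.sqrt t - (t - 1) / 2 * Real.arccos ((t - 1) / (t + 1))) (Set.Ici 1) := by
  have hfr : ContinuousOn (fun t : ℝ => (t - 1) / (t + 1)) (Set.Ici 1) := by
    apply ContinuousOn.div
    · fun_prop
    · fun_prop
    · intro t ht
      have : (1:ℝ) ≤ t := ht
      positivity
  exact (Real.continuous_sqrt.continuousOn).sub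
    ((((continuous_id.sub continuous_const).div_const 2).continuousOn).mul
      (Real.continuous_arccos.comp_continuousOn hfr))

lemma antitone_g : AntitoneOn
    (fun t : ℝ => Real.sqrt t - (t - 1) / 2 * Real.arccos ((t - 1) / (t + 1))) (Set.Ici 1) := by
  apply antitoneOn_of_deriv_nonpos (convex_Ici 1) continuousOn_g
  · intro x hx
    rw [interior_Ici] at hx
    exact (hasDerivAt_g x hx).differentiableAt.differentiableWithinAt
  intro x hx
  rw [interior_Ici] at hx
  have hx' : (1:ℝ) < x := hx
  rw [(hasDerivAt_g x hx').deriv]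
  have hy : Real.sin (Real.arccos ((x - 1) / (x + 1))) ≤ Real.arccos ((x - 1) / (x + 1)) := by
    rcases eq_or_lt_of_le (Real.arccos_nonneg ((x - 1) / (x + 1))) with h | h
    · rw [← h]; simp
    · exact (Real.sin_lt h).le
  rw [sin_arccos_frac x hx'.le] at hy
  have hx1 : (0:ℝ) < x + 1 := by linarith
  have : Real.sqrt x / (x + 1) ≤ Real.arccos ((x - 1) / (x + 1)) / 2 := by
    rw [div_le_div_iff₀ hx1 two_pos]
    rw [div_le_iff₀ hx1] at hy
    linarith
  linarith

lemma gfun_nonneg (x : ℝ) (hx : (1:ℝ) < x) : 0 ≤ gfun x := by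
  rw [gfun_eq x hx.le]
  set y := Real.arccos ((x - 1) / (x + 1)) with hy
  have hypos : 0 ≤ y := Real.arccos_nonneg _
  have hylt : y < π / 2 := Real.arccos_lt_pi_div_two.2 (by
    apply div_pos <;> linarith)
  have hx1 : (0:ℝ) < x + 1 := by linarith
  have hcos : Real.cos y = (x - 1) / (x + 1) := by
    rw [hy, Real.cos_arccos]
    · linarith [frac_nonneg x hx.le]
    · linarith [frac_lt_one x hx.le]
  have hsin : Real.sin y = 2 * Real.sqrt x / (x + 1) := sin_arccos_frac x hx.le
  have htan : y ≤ Real.tan y := by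
    rcases eq_or_lt_of_le hypos with h | h
    · rw [← h]; simp
    · exact (Real.lt_tan h hylt).le
  rw [Real.tan_eq_sin_div_cos, hsin, hcos] at htan
  have hxm1 : (0:ℝ) < x - 1 := by linarith
  have : (x - 1) / 2 * y ≤ (x - 1) / 2 * (2 * Real.sqrt x / (x + 1) / ((x - 1) / (x + 1))) := by
    apply mul_le_mul_of_nonneg_left htan (by positivity)
  have heq : (x - 1) / 2 * (2 * Real.sqrt x / (x + 1) / ((x - 1) / (x + 1))) = Real.sqrt x := by
    field_simp
  linarith [heq ▸ this]

lemma gfun_le (x : ℝ) (hx : (1:ℝ) ≤ x) : gfun x ≤ 2 / Real.sqrt x := by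
  rw [gfun_eq x hx]
  have hx0 : (0:ℝ) < x := by linarith
  have hsx : (0:ℝ) < Real.sqrt x := Real.sqrt_pos.2 hx0
  have hs : Real.sqrt x ^ 2 = x := Real.sq_sqrt hx0.le
  have hy : Real.sin (Real.arccos ((x - 1) / (x + 1))) ≤ Real.arccos ((x - 1) / (x + 1)) := by
    rcases eq_or_lt_of_le (Real.arccos_nonneg ((x - 1) / (x + 1))) with h | h
    · rw [← h]; simp
    · exact (Real.sin_lt h).le
  rw [sin_arccos_frac x hx] at hy
  have h1 : (x - 1) / 2 * (2 * Real.sqrt x / (x + 1)) ≤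
      (x - 1) / 2 * Real.arccos ((x - 1) / (x + 1)) := by
    apply mul_le_mul_of_nonneg_left hy (by linarith)
  have h2 : Real.sqrt x - (x - 1) / 2 * (2 * Real.sqrt x / (x + 1)) ≤ 2 / Real.sqrt x := by
    have heq : Real.sqrt x - (x - 1) / 2 * (2 * Real.sqrt x / (x + 1)) =
        2 * Real.sqrt x / (x + 1) := by
      field_simp; ring
    rw [heq, div_le_div_iff₀ (by positivity) hsx]
    nlinarith [hs]
  linarith

/-- `g(1) = 1`, `g` is monotonically decreasing on `[1, ∞)`, and
`g(x) → 0` as `x → ∞`. -/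
theorem gfun_properties :
    gfun 1 = 1 ∧
    AntitoneOn gfun (Set.Ici 1) ∧
    Filter.Tendsto gfun Filter.atTop (nhds 0) := by
  refine ⟨?_, ?_, ?_⟩
  · rw [gfun]
    norm_num [Real.arccos_zero]
    ring
  · intro a ha b hb hab
    rw [gfun_eq a ha, gfun_eq b hb]
    exact antitone_g ha hb hab
  · have hsqrtT : Tendsto Real.sqrt atTop atTop := by
      apply tendsto_atTop_atTop.2
      intro b
      refine ⟨(max b 0) ^ 2, fun x hx => le_trans (le_max_left b 0) ?_⟩
      rw [← Real.sqrt_sq (le_max_right b 0)]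
      exact Real.sqrt_le_sqrt hx
    have hupper : Tendsto (fun x : ℝ => 2 / Real.sqrt x) atTop (nhds 0) := by
      have := hsqrtT.inv_tendsto_atTop
      have h2 := this.const_mul (2:ℝ)
      simpa [div_eq_mul_inv, mul_zero] using h2
    apply tendsto_of_tendsto_of_tendsto_of_le_of_le' tendsto_const_nhds hupper
    · filter_upwards [eventually_gt_atTop (1:ℝ)] with x hx
      exact gfun_nonneg x hx
    · filter_upwards [eventually_ge_atTop (1:ℝ)] with x hx
      exact gfun_le x hx
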